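/- arXiv:1507.07115 — 5 statements merged into one kernel-verified Lean document; each statement's English description precedes it below -/
import Mathlib

section
/- Let C be an n×n positive definite Hermitian matrix, h ∈ C^n, and γ > 0. The matrix A = C - (1/γ) h h^H is singular (has zero as an eigenvalue) and positive semidefinite if and only if h^H C^{-1} h = γ. -/
open Matrix ComplexOrder

theorem stmt_1 {n : ℕ} (C : Matrix (Fin n) (Fin n) ℂ) (hC : C.PosDef)
    (h : Fin n → ℂ) (hh : h ≠ 0) (γ : ℝ) (hγ : 0 < γ)
    (A : Matrix (Fin n) (Fin n) ℂ)
    (hAdef : A = C - ((γ : ℂ)⁻¹) • vecMulVec h (star h)) :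
    (A.det = 0 ∧ A.PosSemidef) ↔ star h ⬝ᵥ C⁻¹.mulVec h = (γ : ℂ) := by
  have hγ0 : (γ : ℂ) ≠ 0 := by exact_mod_cast hγ.ne'
  have hdetC : IsUnit C.det := (Matrix.isUnit_iff_isUnit_det _).1 hC.isUnit
  have hinv : C * C⁻¹ = 1 := Matrix.mul_nonsing_inv _ hdetC
  have hinv' : C⁻¹ * C = 1 := Matrix.nonsing_inv_mul _ hdetC
  set w : Fin n → ℂ := C⁻¹ *ᵥ h with hw
  have hCw : C *ᵥ w = h := by
    rw [hw, Matrix.mulVec_mulVec, hinv, Matrix.one_mulVec]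
  set s : ℂ := star h ⬝ᵥ w with hs
  -- key mulVec formula for rank one matrix
  have hrank1 : ∀ x : Fin n → ℂ, (vecMulVec h (star h)) *ᵥ x = (star h ⬝ᵥ x) • h := by
    intro x
    ext i
    simp [Matrix.vecMulVec_apply, Matrix.mulVec, dotProduct, Finset.mul_sum,
      mul_comm, mul_assoc, mul_left_comm]
  have hAx : ∀ x : Fin n → ℂ, A *ᵥ x = C *ᵥ x - ((γ:ℂ)⁻¹ * (star h ⬝ᵥ x)) • h := by
    intro x
    rw [hAdef, Matrix.sub_mulVec, Matrix.smul_mulVec, hrank1, smul_smul]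
  -- star w vecMul C = star h
  have hvecMul : star w ᵥ* C = star h := by
    have h2 := Matrix.star_mulVec C w
    rw [hCw, hC.isHermitian.eq] at h2
    exact h2.symm
  constructor
  · rintro ⟨hdet0, -⟩
    obtain ⟨v, hv0, hAv⟩ := (Matrix.exists_mulVec_eq_zero_iff).2 hdet0
    rw [hAx v, sub_eq_zero] at hAv
    set c : ℂ := star h ⬝ᵥ v with hc
    have hcne : c ≠ 0 := by
      intro hc0
      apply hv0
      have : C *ᵥ v = 0 := by rw [hAv, hc0, mul_zero, zero_smul]
      have := congrArg (fun y => C⁻¹ *ᵥ y) this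
      simpa [Matrix.mulVec_mulVec, hinv', Matrix.one_mulVec] using this
    -- v = γ⁻¹ c • w
    have hv : v = ((γ:ℂ)⁻¹ * c) • w := by
      have := congrArg (fun y => C⁻¹ *ᵥ y) hAv
      simpa [Matrix.mulVec_mulVec, hinv', Matrix.one_mulVec, Matrix.mulVec_smul] using this
    have : c = (γ:ℂ)⁻¹ * c * s := by
      conv_lhs => rw [hc, hv]
      simp [dotProduct_smul, hs, mul_assoc]
    have hss : s = (γ:ℂ) := by
      have h2 : c * (s - (γ:ℂ)) = 0 := by
        linear_combination (-(γ:ℂ)) * this - (c * s) * mul_inv_cancel₀ hγ0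
      rcases mul_eq_zero.1 h2 with h1 | h1
      · exact absurd h1 hcne
      · exact sub_eq_zero.1 h1
    simpa [hs, hw] using hss
  · intro hsγ
    have hsγ' : s = (γ:ℂ) := by simpa [hs, hw] using hsγ
    have hwne : w ≠ 0 := by
      intro h0
      apply hh
      rw [← hCw, h0, Matrix.mulVec_zero]
    have hAw : A *ᵥ w = 0 := by
      rw [hAx w, hCw, ← hs, hsγ', inv_mul_cancel₀ hγ0, one_smul, sub_self]
    refine ⟨Matrix.exists_mulVec_eq_zero_iff.1 ⟨w, hwne, hAw⟩, Matrix.PosSemidef.of_dotProduct_mulVec_nonneg ?_ ?_⟩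
    · -- Hermitian
      rw [hAdef]
      refine (hC.isHermitian.sub ?_)
      have : ((γ:ℂ)⁻¹ • vecMulVec h (star h)).IsHermitian := by
        unfold Matrix.IsHermitian
        ext i j
        simp [Matrix.conjTranspose_apply, Matrix.vecMulVec_apply, Complex.conj_ofReal,
          mul_comm]
      exact this
    · intro x
      set c : ℂ := star h ⬝ᵥ x with hc
      set t : ℂ := c / γ with ht
      set y : Fin n → ℂ := x - t • w with hy
      have hQC : 0 ≤ star y ⬝ᵥ C *ᵥ y := hC.posSemidef.dotProduct_mulVec_nonneg y
      have hsxh : star x ⬝ᵥ h = star c := by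
        rw [hc, Matrix.star_dotProduct]
      have hwCx : star w ⬝ᵥ C *ᵥ x = c := by
        rw [Matrix.dotProduct_mulVec, hvecMul, hc]
      have hxCw : star x ⬝ᵥ C *ᵥ w = star c := by rw [hCw, hsxh]
      have hwCw : star w ⬝ᵥ C *ᵥ w = (γ:ℂ) := by
        rw [Matrix.dotProduct_mulVec, hvecMul, ← hs, hsγ']
      have expand : star y ⬝ᵥ C *ᵥ y = star x ⬝ᵥ A *ᵥ x := by
        have hstary : star y = star x - star t • star w := by
          rw [hy]; ext i; simp [mul_comm]
        have hCy : C *ᵥ y = C *ᵥ x - t • (C *ᵥ w) := by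
          rw [hy, Matrix.mulVec_sub, Matrix.mulVec_smul]
        rw [hstary, hCy, hAx x, dotProduct_sub, sub_dotProduct,
          sub_dotProduct, dotProduct_smul, smul_dotProduct,
          smul_dotProduct, dotProduct_smul, dotProduct_sub,
          dotProduct_smul, hwCx, hxCw, hwCw, hsxh]
        have hstart : star t = star c / γ := by
          rw [ht, star_div₀, Complex.star_def, Complex.conj_ofReal]
        rw [ht, hstart]
        field_simp
        rw [← hc]
        linear_combination (c * star c * (γ:ℂ)⁻¹) * mul_inv_cancel₀ hγ0
      rw [← expand]
      exact hQC
end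

section
/- Fix positive constants γ_k and Hermitian positive semidefinite rank-one matrices M_k = g_k g_k^H (g_k ∈ C^n nonzero), k = 1,…,K. Define f : R_{≥0}^K → R^K by f_k(λ) = (γ_k/(1+γ_k)) · 1/(g_k^H (I + Σ_j λ_j M_j)^{-1} g_k). Then f is a standard function: (i) f(λ) > 0 componentwise; (ii) f is monotone: λ ≥ λ' implies f(λ) ≥ f(λ'); (iii) for every α > 1, α f(λ) ≥ f(α λ) componentwise. -/
open Matrix ComplexOrder

lemma re_nonneg_of_nonneg {z : ℂ} (h : 0 ≤ z) : 0 ≤ z.re := by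
  rw [Complex.le_def] at h; exact h.1

lemma re_pos_of_pos {z : ℂ} (h : 0 < z) : 0 < z.re := by
  rw [Complex.lt_def] at h; exact h.1

lemma psd_real_smul {n : ℕ} {c : ℝ} (hc : 0 ≤ c) {A : Matrix (Fin n) (Fin n) ℂ}
    (hA : A.PosSemidef) : ((c : ℂ) • A).PosSemidef := by
  refine Matrix.PosSemidef.of_dotProduct_mulVec_nonneg ?_ (fun x => ?_)
  · show ((c:ℂ) • A)ᴴ = (c:ℂ) • A
    rw [conjTranspose_smul, hA.1, Complex.star_def, Complex.conj_ofReal]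
  · rw [smul_mulVec, dotProduct_smul]
    have hcc : (0:ℂ) ≤ (c:ℂ) := Complex.zero_le_real.mpr hc
    simpa [smul_eq_mul] using mul_nonneg hcc (hA.dotProduct_mulVec_nonneg x)

lemma pd_real_smul {n : ℕ} {c : ℝ} (hc : 0 < c) {A : Matrix (Fin n) (Fin n) ℂ}
    (hA : A.PosDef) : ((c : ℂ) • A).PosDef := by
  refine Matrix.PosDef.of_dotProduct_mulVec_pos ?_ (fun x hx => ?_)
  · show ((c:ℂ) • A)ᴴ = (c:ℂ) • A
    rw [conjTranspose_smul, hA.1, Complex.star_def, Complex.conj_ofReal]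
  · rw [smul_mulVec, dotProduct_smul]
    have hcc : (0:ℂ) < (c:ℂ) := Complex.zero_lt_real.mpr hc
    simpa [smul_eq_mul] using mul_pos hcc (hA.dotProduct_mulVec_pos hx)

lemma psd_rank1 {n : ℕ} (g : Fin n → ℂ) : (vecMulVec g (star g)).PosSemidef := by
  refine Matrix.PosSemidef.of_dotProduct_mulVec_nonneg ?_ (fun x => ?_)
  · ext i j
    simp [conjTranspose_apply, vecMulVec_apply, mul_comm]
  · have hmv : (vecMulVec g (star g)) *ᵥ x = (star g ⬝ᵥ x) • g := by
      ext i
      simp [mulVec, dotProduct, vecMulVec_apply, Finset.mul_sum, mul_assoc, mul_comm,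
        mul_left_comm]
    rw [hmv, dotProduct_smul]
    have hx : star x ⬝ᵥ g = star (star g ⬝ᵥ x) := by
      rw [star_dotProduct]
    rw [smul_eq_mul, hx]
    exact mul_star_self_nonneg _

lemma key_lemma {n : ℕ} {B C : Matrix (Fin n) (Fin n) ℂ} (hB : B.PosDef) (hC : C.PosDef)
    (hBC : (C - B).PosSemidef) (x : Fin n → ℂ) :
    (star x ⬝ᵥ C⁻¹ *ᵥ x).re ≤ (star x ⬝ᵥ B⁻¹ *ᵥ x).re := by
  obtain ⟨u, hu⟩ : ∃ u, B⁻¹ *ᵥ x = u := ⟨_, rfl⟩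
  obtain ⟨y, hy⟩ : ∃ y, C⁻¹ *ᵥ x = y := ⟨_, rfl⟩
  have hBd : IsUnit B.det := (isUnit_iff_isUnit_det _).1 hB.isUnit
  have hCd : IsUnit C.det := (isUnit_iff_isUnit_det _).1 hC.isUnit
  have hBu : B *ᵥ u = x := by
    rw [← hu, mulVec_mulVec, mul_nonsing_inv _ hBd, one_mulVec]
  have hCy : C *ᵥ y = x := by
    rw [← hy, mulVec_mulVec, mul_nonsing_inv _ hCd, one_mulVec]
  have herm : ∀ w, star u ⬝ᵥ B *ᵥ w = star x ⬝ᵥ w := by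
    intro w
    rw [dotProduct_mulVec, ← hBu, star_mulVec, hB.isHermitian.eq]
  have hconj : ∀ v w : Fin n → ℂ, (star v ⬝ᵥ w).re = (star w ⬝ᵥ v).re := by
    intro v w
    have : star (star v ⬝ᵥ w) = star w ⬝ᵥ v := by
      rw [star_dotProduct]; simp
    rw [← this, Complex.star_def, Complex.conj_re]
  have h1 : 0 ≤ ((star (y - u)) ⬝ᵥ B *ᵥ (y - u)).re :=
    re_nonneg_of_nonneg (hB.posSemidef.dotProduct_mulVec_nonneg _)
  have hexp : ((star (y - u)) ⬝ᵥ B *ᵥ (y - u)).re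
      = (star y ⬝ᵥ B *ᵥ y).re - 2 * (star x ⬝ᵥ y).re + (star x ⬝ᵥ u).re := by
    have e1 : (star (y - u)) ⬝ᵥ B *ᵥ (y - u)
        = star y ⬝ᵥ B *ᵥ y - star y ⬝ᵥ x - (star x ⬝ᵥ y - star u ⬝ᵥ x) := by
      rw [star_sub, sub_dotProduct, mulVec_sub, dotProduct_sub, dotProduct_sub, hBu,
        herm y]
    rw [e1]
    simp only [Complex.sub_re]
    rw [hconj y x, hconj u x]
    ring
  have h2 : (star y ⬝ᵥ C *ᵥ y).re = (star x ⬝ᵥ y).re := by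
    have : ∀ w, star y ⬝ᵥ C *ᵥ w = star x ⬝ᵥ w := by
      intro w
      rw [dotProduct_mulVec, ← hCy, star_mulVec, hC.isHermitian.eq]
    rw [this y]
  have h3 : (star y ⬝ᵥ B *ᵥ y).re ≤ (star y ⬝ᵥ C *ᵥ y).re := by
    have := re_nonneg_of_nonneg (hBC.dotProduct_mulVec_nonneg y)
    rw [sub_mulVec, dotProduct_sub, Complex.sub_re] at this
    linarith
  rw [hy, hu]
  linarith [hexp ▸ h1]

theorem stmt_8 {n K : ℕ} (γ : Fin K → ℝ) (hγ : ∀ k, 0 < γ k)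
    (g : Fin K → (Fin n → ℂ)) (hg : ∀ k, g k ≠ 0)
    (f : (Fin K → ℝ) → Fin K → ℝ)
    (hf : ∀ lam k, f lam k = (γ k / (1 + γ k)) *
      ((star (g k) ⬝ᵥ ((1 + ∑ j, (lam j : ℂ) • vecMulVec (g j) (star (g j)))⁻¹).mulVec (g k)).re)⁻¹) :
    (∀ lam : Fin K → ℝ, (∀ j, 0 ≤ lam j) → ∀ k, 0 < f lam k) ∧
    (∀ lam lam' : Fin K → ℝ, (∀ j, 0 ≤ lam' j) → (∀ j, lam' j ≤ lam j) →
      ∀ k, f lam' k ≤ f lam k) ∧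
    (∀ lam : Fin K → ℝ, (∀ j, 0 ≤ lam j) → ∀ α : ℝ, 1 < α →
      ∀ k, f (α • lam) k ≤ α * f lam k) := by
  set A : (Fin K → ℝ) → Matrix (Fin n) (Fin n) ℂ :=
    fun lam => 1 + ∑ j, (lam j : ℂ) • vecMulVec (g j) (star (g j)) with hA
  have hApos : ∀ lam : Fin K → ℝ, (∀ j, 0 ≤ lam j) → (A lam).PosDef := by
    intro lam hlam
    refine Matrix.PosDef.add_posSemidef Matrix.PosDef.one ?_
    exact Finset.sum_induction _ _ (fun _ _ ha hb => ha.add hb) Matrix.PosSemidef.zero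
      (fun j _ => psd_real_smul (hlam j) (psd_rank1 (g j)))
  set q : (Fin K → ℝ) → Fin K → ℝ :=
    fun lam k => (star (g k) ⬝ᵥ (A lam)⁻¹ *ᵥ (g k)).re with hq
  have hfq : ∀ lam k, f lam k = (γ k / (1 + γ k)) * (q lam k)⁻¹ := by
    intro lam k; rw [hf lam k]
  have hc : ∀ k, 0 < γ k / (1 + γ k) := fun k => div_pos (hγ k) (by linarith [hγ k])
  have hqpos : ∀ lam, (∀ j, 0 ≤ lam j) → ∀ k, 0 < q lam k := by
    intro lam hlam k
    exact re_pos_of_pos (((hApos lam hlam).inv).dotProduct_mulVec_pos (hg k))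
  refine ⟨?_, ?_, ?_⟩
  · intro lam hlam k
    rw [hfq]
    exact mul_pos (hc k) (inv_pos.mpr (hqpos lam hlam k))
  · intro lam lam' hlam' hle k
    have hlam : ∀ j, 0 ≤ lam j := fun j => le_trans (hlam' j) (hle j)
    have hdiff : (A lam - A lam').PosSemidef := by
      have h : A lam - A lam'
          = ∑ j, (((lam j : ℂ)) - ((lam' j : ℂ))) • vecMulVec (g j) (star (g j)) := by
        rw [hA]
        simp only [add_sub_add_left_eq_sub, ← Finset.sum_sub_distrib, sub_smul]
      rw [h]
      refine Finset.sum_induction _ _ (fun _ _ ha hb => ha.add hb) Matrix.PosSemidef.zero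
        (fun j _ => ?_)
      have : ((lam j : ℂ)) - ((lam' j : ℂ)) = ((lam j - lam' j : ℝ) : ℂ) := by push_cast; ring
      rw [this]
      exact psd_real_smul (by linarith [hle j]) (psd_rank1 (g j))
    have hqle : q lam k ≤ q lam' k :=
      key_lemma (hApos lam' hlam') (hApos lam hlam) hdiff (g k)
    rw [hfq, hfq]
    gcongr
    · exact (hc k).le
    · exact hqpos lam hlam k
  · intro lam hlam α hα k
    have hα0 : (0:ℝ) < α := by linarith
    have hαC : ((α:ℂ)) ≠ 0 := by exact_mod_cast hα0.ne'
    have hαlam : ∀ j, 0 ≤ (α • lam) j := fun j => by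
      exact mul_nonneg hα0.le (hlam j)
    have hCpd : ((α:ℂ) • A lam).PosDef := pd_real_smul hα0 (hApos lam hlam)
    have hBpd : (A (α • lam)).PosDef := hApos _ hαlam
    have hdiff : ((α:ℂ) • A lam - A (α • lam)).PosSemidef := by
      have h : (α:ℂ) • A lam - A (α • lam) = ((α - 1 : ℝ) : ℂ) • (1 : Matrix (Fin n) (Fin n) ℂ) := by
        rw [hA]
        simp only [Pi.smul_apply, smul_eq_mul, smul_add, Finset.smul_sum, smul_smul]
        push_cast
        rw [sub_smul, one_smul]
        abel
      rw [h]
      exact psd_real_smul (by linarith) Matrix.PosSemidef.one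
    have hkey := key_lemma hBpd hCpd hdiff (g k)
    have hCinv : ((α:ℂ) • A lam)⁻¹ = (α:ℂ)⁻¹ • (A lam)⁻¹ := by
      apply inv_eq_right_inv
      rw [smul_mul_smul_comm, mul_inv_cancel₀ hαC,
        mul_nonsing_inv _ ((isUnit_iff_isUnit_det _).1 (hApos lam hlam).isUnit), one_smul]
    have hCq : (star (g k) ⬝ᵥ ((α:ℂ) • A lam)⁻¹ *ᵥ (g k)).re = α⁻¹ * q lam k := by
      rw [hCinv, smul_mulVec, dotProduct_smul, smul_eq_mul, ← Complex.ofReal_inv,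
        Complex.re_ofReal_mul]
    rw [hCq] at hkey
    have h1 : 0 < α⁻¹ * q lam k := by
      have := hqpos lam hlam k
      positivity
    rw [hfq, hfq]
    have h2 : (q (α • lam) k)⁻¹ ≤ (α⁻¹ * q lam k)⁻¹ := by
      gcongr
    calc γ k / (1 + γ k) * (q (α • lam) k)⁻¹
        ≤ γ k / (1 + γ k) * (α⁻¹ * q lam k)⁻¹ := by
          have := (hc k).le
          gcongr
      _ = α * (γ k / (1 + γ k) * (q lam k)⁻¹) := by
          rw [mul_inv, inv_inv]
          ring
end

section
/- Let C be Hermitian positive definite, H a matrix, v a vector with H v ≠ 0, and suppose u = α C^{-1} H v for some nonzero scalar α, and u^H (C - (1/γ) H v v^H H^H) u = 0 with γ > 0. Then (1/γ) v^H H^H C^{-1} H v = 1 and consequently (C - (1/γ) H v v^H H^H) u = 0. -/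
open Matrix ComplexOrder

lemma vecMulVec_mulVec' {n m : ℕ} (a : Fin n → ℂ) (b : Fin m → ℂ) (x : Fin m → ℂ) :
    (vecMulVec a b).mulVec x = (b ⬝ᵥ x) • a := by
  funext i
  simp [mulVec, dotProduct, vecMulVec_apply, Finset.sum_mul, mul_assoc, mul_comm, mul_left_comm, Finset.mul_sum]

theorem stmt_11 {N M : ℕ} (C : Matrix (Fin N) (Fin N) ℂ) (hC : C.PosDef)
    (H : Matrix (Fin N) (Fin M) ℂ) (v : Fin M → ℂ) (hHv : H.mulVec v ≠ 0)
    (γ : ℝ) (hγ : 0 < γ) (α : ℂ) (hα : α ≠ 0)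
    (u : Fin N → ℂ) (hu : u = α • C⁻¹.mulVec (H.mulVec v))
    (htight : star u ⬝ᵥ (C - ((γ : ℂ)⁻¹) •
      vecMulVec (H.mulVec v) (star (H.mulVec v))).mulVec u = 0) :
    (γ : ℂ)⁻¹ * (star (H.mulVec v) ⬝ᵥ C⁻¹.mulVec (H.mulVec v)) = 1 ∧
    (C - ((γ : ℂ)⁻¹) • vecMulVec (H.mulVec v) (star (H.mulVec v))).mulVec u = 0 := by
  set w := H.mulVec v with hw
  set s : ℂ := star w ⬝ᵥ C⁻¹.mulVec w with hs
  have hinv : Invertible C := hC.isUnit.invertible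
  have hCiH : C⁻¹.IsHermitian := hC.inv.isHermitian
  have hspos : 0 < s := hC.inv.dotProduct_mulVec_pos hHv
  have hsne : s ≠ 0 := hspos.ne'
  -- C *ᵥ (C⁻¹ *ᵥ w) = w
  have hCw : C.mulVec (C⁻¹.mulVec w) = w := by
    rw [mulVec_mulVec, Matrix.mul_inv_of_invertible, one_mulVec]
  -- star (C⁻¹ *ᵥ w) ⬝ᵥ w = s
  have hkey : star (C⁻¹.mulVec w) ⬝ᵥ w = s := by
    rw [star_mulVec, hCiH.eq, ← dotProduct_mulVec]
  have hCu : C.mulVec u = α • w := by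
    rw [hu, mulVec_smul, hCw]
  have hterm1 : star u ⬝ᵥ C.mulVec u = star α * α * s := by
    rw [hCu, hu, dotProduct_smul, star_smul, smul_dotProduct, smul_eq_mul, smul_eq_mul,
      hkey]
    ring
  have hwu : star w ⬝ᵥ u = α * s := by
    rw [hu, dotProduct_smul, smul_eq_mul, hs]
  have huw : star u ⬝ᵥ w = star α * s := by
    rw [hu, star_smul, smul_dotProduct, smul_eq_mul, hkey]
  have hAu : (vecMulVec w (star w)).mulVec u = (α * s) • w := by
    rw [vecMulVec_mulVec', hwu]
  have ht : star α * α * s * (1 - (γ : ℂ)⁻¹ * s) = 0 := by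
    have := htight
    rw [sub_mulVec, smul_mulVec, dotProduct_sub, dotProduct_smul, hterm1, hAu,
      dotProduct_smul, smul_eq_mul, smul_eq_mul, huw] at this
    linear_combination this
  have hαs : star α * α * s ≠ 0 := by
    exact mul_ne_zero (mul_ne_zero (star_ne_zero.mpr hα) hα) hsne
  have hγs : (γ : ℂ)⁻¹ * s = 1 := by
    have h1 : (1 - (γ : ℂ)⁻¹ * s) = 0 := by
      rcases mul_eq_zero.mp ht with h | h
      · exact absurd h hαs
      · exact h
    linear_combination -h1
  refine ⟨hγs, ?_⟩
  rw [sub_mulVec, smul_mulVec, hAu, hCu, smul_smul]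
  have : (γ : ℂ)⁻¹ * (α * s) = α := by
    rw [mul_left_comm, hγs, mul_one]
  rw [this, sub_self]
end

section
/- Let a_k ∈ C^M, γ_k > 0, c_k > 0 for k=1,…,K. Any two optimal solutions {v_k*} and {v_k**} of the problem min Σ_k ||v_k||² subject to |a_k^H v_k|² ≥ γ_k (Σ_{j≠k} |a_k^H v_j|² + c_k) for all k, satisfy v_k* = e^{iφ_k} v_k** for some phases φ_k ∈ R, for every k. -/
open Matrix ComplexOrder

lemma aux_cs {ι : Type*} (s : Finset ι) (b b' : ι → ℝ) (c : ℝ) (hc : 0 ≤ c) :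
    ((∑ j ∈ s, b j * b' j) + c) ^ 2 ≤ ((∑ j ∈ s, b j ^ 2) + c) * ((∑ j ∈ s, b' j ^ 2) + c) := by
  have h1 : (∑ j ∈ s, b j * b' j) ^ 2 ≤ (∑ j ∈ s, b j ^ 2) * (∑ j ∈ s, b' j ^ 2) :=
    Finset.sum_mul_sq_le_sq_mul_sq s b b'
  have h2 : 2 * (∑ j ∈ s, b j * b' j) ≤ (∑ j ∈ s, b j ^ 2) + (∑ j ∈ s, b' j ^ 2) := by
    rw [Finset.mul_sum, ← Finset.sum_add_distrib]
    refine Finset.sum_le_sum fun i _ => ?_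
    nlinarith [sq_nonneg (b i - b' i)]
  nlinarith [hc]

lemma aux_mid {ι : Type*} (s : Finset ι) (b b' : ι → ℝ) (γ c A A' : ℝ)
    (hγ : 0 < γ) (hc : 0 ≤ c) (hA0 : 0 ≤ A) (hA0' : 0 ≤ A')
    (hA : γ * ((∑ j ∈ s, b j ^ 2) + c) ≤ A ^ 2)
    (hA' : γ * ((∑ j ∈ s, b' j ^ 2) + c) ≤ A' ^ 2) :
    γ * ((∑ j ∈ s, ((b j + b' j) / 2) ^ 2) + c) ≤ ((A + A') / 2) ^ 2 := by
  set S := (∑ j ∈ s, b j ^ 2) + c with hS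
  set S' := (∑ j ∈ s, b' j ^ 2) + c with hS'
  have hSnn : 0 ≤ S := add_nonneg (Finset.sum_nonneg fun i _ => sq_nonneg _) hc
  have hSnn' : 0 ≤ S' := add_nonneg (Finset.sum_nonneg fun i _ => sq_nonneg _) hc
  have hT : (∑ j ∈ s, b j * b' j) + c ≤ Real.sqrt (S * S') :=
    Real.le_sqrt_of_sq_le (aux_cs s b b' c hc)
  set q := Real.sqrt (γ * S) with hq
  set q' := Real.sqrt (γ * S') with hq'
  have hq0 : 0 ≤ q := Real.sqrt_nonneg _
  have hq0' : 0 ≤ q' := Real.sqrt_nonneg _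
  have hq2 : q ^ 2 = γ * S := Real.sq_sqrt (by positivity)
  have hq2' : q' ^ 2 = γ * S' := Real.sq_sqrt (by positivity)
  have e1 : q ≤ A := by
    rw [show A = Real.sqrt (A ^ 2) from (Real.sqrt_sq hA0).symm]
    exact Real.sqrt_le_sqrt hA
  have e1' : q' ≤ A' := by
    rw [show A' = Real.sqrt (A' ^ 2) from (Real.sqrt_sq hA0').symm]
    exact Real.sqrt_le_sqrt hA'
  have e2 : q * q' = γ * Real.sqrt (S * S') := by
    rw [hq, hq', ← Real.sqrt_mul (by positivity),
      show γ * S * (γ * S') = γ ^ 2 * (S * S') by ring,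
      Real.sqrt_mul (by positivity), Real.sqrt_sq hγ.le]
  have e3 : ∑ j ∈ s, ((b j + b' j) / 2) ^ 2
      = ((∑ j ∈ s, b j ^ 2) + (∑ j ∈ s, b' j ^ 2) + 2 * (∑ j ∈ s, b j * b' j)) / 4 := by
    rw [Finset.mul_sum, ← Finset.sum_add_distrib, ← Finset.sum_add_distrib, Finset.sum_div]
    exact Finset.sum_congr rfl fun j _ => by ring
  have hTγ : γ * ((∑ j ∈ s, b j * b' j) + c) ≤ γ * Real.sqrt (S * S') :=
    mul_le_mul_of_nonneg_left hT hγ.le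
  have hprod : q * q' ≤ A * A' := mul_le_mul e1 e1' hq0' hA0
  nlinarith [hq2, hq2', e2, e3, hTγ, hprod, hS, hS']

theorem stmt_16 {M K : ℕ} (a : Fin K → (Fin M → ℂ)) (γ c : Fin K → ℝ)
    (hγ : ∀ k, 0 < γ k) (hc : ∀ k, 0 < c k)
    (Feas : (Fin K → (Fin M → ℂ)) → Prop)
    (hFeas : ∀ v, Feas v ↔ ∀ k,
      ‖star (a k) ⬝ᵥ v k‖ ^ 2 ≥
        γ k * ((∑ j ∈ Finset.univ.erase k, ‖star (a k) ⬝ᵥ v j‖ ^ 2) + c k))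
    (v v' : Fin K → (Fin M → ℂ)) (hv : Feas v) (hv' : Feas v')
    (hopt : ∀ w, Feas w → ∑ k, (star (v k) ⬝ᵥ v k).re ≤ ∑ k, (star (w k) ⬝ᵥ w k).re)
    (hopt' : ∀ w, Feas w → ∑ k, (star (v' k) ⬝ᵥ v' k).re ≤ ∑ k, (star (w k) ⬝ᵥ w k).re) :
    ∀ k, ∃ φ : ℝ, v k = Complex.exp ((φ : ℂ) * Complex.I) • v' k := by
  have hvF := (hFeas v).mp hv
  have hv'F := (hFeas v').mp hv'
  -- signal terms are nonzero
  have hspos : ∀ (x : Fin K → (Fin M → ℂ)),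
      (∀ k, ‖star (a k) ⬝ᵥ x k‖ ^ 2 ≥
        γ k * ((∑ j ∈ Finset.univ.erase k, ‖star (a k) ⬝ᵥ x j‖ ^ 2) + c k)) →
      ∀ k, star (a k) ⬝ᵥ x k ≠ 0 := by
    intro x hx k hzero
    have h := hx k
    rw [hzero] at h
    simp only [map_zero, norm_zero] at h
    have hsum : 0 ≤ ∑ j ∈ Finset.univ.erase k, ‖star (a k) ⬝ᵥ x j‖ ^ 2 :=
      Finset.sum_nonneg fun j _ => sq_nonneg _
    nlinarith [hγ k, hc k, mul_pos (hγ k) (lt_of_lt_of_le (hc k) (le_add_of_nonneg_left hsum))]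
  have hs := hspos v hvF
  have hs' := hspos v' hv'F
  -- phase factors
  set u : Fin K → ℂ := fun k =>
    (star (a k) ⬝ᵥ v k / (‖star (a k) ⬝ᵥ v k‖ : ℂ)) *
      ((‖star (a k) ⬝ᵥ v' k‖ : ℂ) / (star (a k) ⬝ᵥ v' k)) with hu_def
  have habs_ne : ∀ k, (‖star (a k) ⬝ᵥ v k‖ : ℂ) ≠ 0 := fun k => by
    simp [Complex.ofReal_ne_zero, norm_ne_zero_iff, hs k]
  have habs_ne' : ∀ k, (‖star (a k) ⬝ᵥ v' k‖ : ℂ) ≠ 0 := fun k => by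
    simp [Complex.ofReal_ne_zero, norm_ne_zero_iff, hs' k]
  have hu1 : ∀ k, ‖(u k)‖ = 1 := by
    intro k
    rw [hu_def]
    simp only [norm_mul, norm_div, Complex.norm_real, Real.norm_eq_abs,
      abs_of_nonneg (norm_nonneg _)]
    field_simp [norm_ne_zero_iff.mpr (hs k), norm_ne_zero_iff.mpr (hs' k)]
  have hnsu : ∀ k, Complex.normSq (u k) = 1 := by
    intro k; rw [← Complex.sq_norm, hu1 k, one_pow]
  -- the midpoint
  set w : Fin K → (Fin M → ℂ) := fun k => (2⁻¹ : ℂ) • (v k + u k • v' k) with hw_def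
  have hdot : ∀ k j, star (a k) ⬝ᵥ w j
      = 2⁻¹ * ((star (a k) ⬝ᵥ v j) + u j * (star (a k) ⬝ᵥ v' j)) := by
    intro k j
    simp [hw_def, dotProduct_smul, dotProduct_add, smul_eq_mul]
    ring
  -- signal of midpoint
  have hsig : ∀ k, ‖star (a k) ⬝ᵥ w k‖
      = (‖star (a k) ⬝ᵥ v k‖ + ‖star (a k) ⬝ᵥ v' k‖) / 2 := by
    intro k
    have hus : u k * (star (a k) ⬝ᵥ v' k)
        = ((‖star (a k) ⬝ᵥ v' k‖ / ‖star (a k) ⬝ᵥ v k‖ : ℝ) : ℂ)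
          * (star (a k) ⬝ᵥ v k) := by
      rw [hu_def]
      push_cast
      field_simp
      rw [mul_div_mul_right _ _ (hs' k), mul_comm]
    rw [hdot k k, hus]
    rw [show (star (a k) ⬝ᵥ v k) + ((‖star (a k) ⬝ᵥ v' k‖ /
          ‖star (a k) ⬝ᵥ v k‖ : ℝ) : ℂ) * (star (a k) ⬝ᵥ v k)
        = ((1 + (‖star (a k) ⬝ᵥ v' k‖ /
          ‖star (a k) ⬝ᵥ v k‖ : ℝ) : ℝ) : ℂ) * (star (a k) ⬝ᵥ v k) by
      push_cast; ring]
    rw [norm_mul, norm_mul, Complex.norm_real, Real.norm_eq_abs]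
    have h1 : ‖(2⁻¹ : ℂ)‖ = 2⁻¹ := by norm_num
    have h2 : 0 ≤ 1 + ‖star (a k) ⬝ᵥ v' k‖ / ‖star (a k) ⬝ᵥ v k‖ := by
      positivity
    rw [h1, abs_of_nonneg h2]
    have h3 : ‖star (a k) ⬝ᵥ v k‖ ≠ 0 := norm_ne_zero_iff.mpr (hs k)
    field_simp
  -- interference bound
  have hint : ∀ k j, ‖star (a k) ⬝ᵥ w j‖
      ≤ (‖star (a k) ⬝ᵥ v j‖ + ‖star (a k) ⬝ᵥ v' j‖) / 2 := by
    intro k j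
    rw [hdot k j]
    calc ‖(2⁻¹ * ((star (a k) ⬝ᵥ v j) + u j * (star (a k) ⬝ᵥ v' j)))‖
        = 2⁻¹ * ‖(star (a k) ⬝ᵥ v j) + u j * (star (a k) ⬝ᵥ v' j)‖ := by
          rw [norm_mul]; norm_num
      _ ≤ 2⁻¹ * (‖star (a k) ⬝ᵥ v j‖ + ‖(u j * (star (a k) ⬝ᵥ v' j))‖) := by
          gcongr; exact norm_add_le _ _
      _ = (‖star (a k) ⬝ᵥ v j‖ + ‖star (a k) ⬝ᵥ v' j‖) / 2 := by
          rw [norm_mul, hu1 j, one_mul]; ring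
  -- w is feasible
  have hwF : Feas w := by
    rw [hFeas]
    intro k
    have hAk := hvF k
    have hAk' := hv'F k
    have hmid := aux_mid (Finset.univ.erase k)
      (fun j => ‖star (a k) ⬝ᵥ v j‖) (fun j => ‖star (a k) ⬝ᵥ v' j‖)
      (γ k) (c k) (‖star (a k) ⬝ᵥ v k‖) (‖star (a k) ⬝ᵥ v' k‖)
      (hγ k) (hc k).le (norm_nonneg _) (norm_nonneg _) hAk hAk'
    have hsumle : ∑ j ∈ Finset.univ.erase k, ‖star (a k) ⬝ᵥ w j‖ ^ 2
        ≤ ∑ j ∈ Finset.univ.erase k,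
          ((‖star (a k) ⬝ᵥ v j‖ + ‖star (a k) ⬝ᵥ v' j‖) / 2) ^ 2 := by
      refine Finset.sum_le_sum fun j _ => ?_
      exact pow_le_pow_left₀ (norm_nonneg _) (hint k j) 2
    calc γ k * ((∑ j ∈ Finset.univ.erase k, ‖star (a k) ⬝ᵥ w j‖ ^ 2) + c k)
        ≤ γ k * ((∑ j ∈ Finset.univ.erase k,
            ((‖star (a k) ⬝ᵥ v j‖ + ‖star (a k) ⬝ᵥ v' j‖) / 2) ^ 2)
            + c k) := by
          gcongr
          exact (hγ k).le
      _ ≤ ((‖star (a k) ⬝ᵥ v k‖ + ‖star (a k) ⬝ᵥ v' k‖) / 2) ^ 2 := hmid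
      _ = ‖star (a k) ⬝ᵥ w k‖ ^ 2 := by rw [hsig k]
  -- energies
  have hE : ∀ x : Fin M → ℂ, (star x ⬝ᵥ x).re = ∑ i, Complex.normSq (x i) := by
    intro x
    rw [dotProduct, Complex.re_sum]
    exact Finset.sum_congr rfl fun i _ => by
      simp only [Pi.star_apply, RCLike.star_def, Complex.normSq_apply, Complex.mul_re,
        Complex.conj_re, Complex.conj_im]
      ring
  have hpoint : ∀ z y : ℂ, Complex.normSq (2⁻¹ * (z + y))
      = (Complex.normSq z + Complex.normSq y) / 2 - (1/4) * Complex.normSq (z - y) := by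
    intro z y
    rw [Complex.normSq_mul, Complex.normSq_inv, Complex.normSq_ofNat, Complex.normSq_add,
      Complex.normSq_sub]
    ring
  have hEw : ∀ k, (star (w k) ⬝ᵥ w k).re
      = ((star (v k) ⬝ᵥ v k).re + (star (v' k) ⬝ᵥ v' k).re) / 2
        - (1/4) * ∑ i, Complex.normSq (v k i - u k * v' k i) := by
    intro k
    rw [hE, hE, hE]
    have : ∀ i, Complex.normSq (w k i)
        = (Complex.normSq (v k i) + Complex.normSq (v' k i)) / 2
          - (1/4) * Complex.normSq (v k i - u k * v' k i) := by
      intro i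
      have h1 : w k i = 2⁻¹ * (v k i + u k * v' k i) := by
        simp [hw_def, smul_eq_mul]
        ring
      rw [h1, hpoint]
      rw [Complex.normSq_mul, hnsu k, one_mul]
    rw [Finset.sum_congr rfl fun i _ => this i, Finset.sum_sub_distrib, ← Finset.mul_sum,
      ← Finset.sum_div, Finset.sum_add_distrib]
  -- optimality forces D = 0
  have hP := hopt w hwF
  have hPP' := hopt' v hv
  set D : Fin K → ℝ := fun k => ∑ i, Complex.normSq (v k i - u k * v' k i) with hD_def
  have hDnn : ∀ k, 0 ≤ D k := fun k => Finset.sum_nonneg fun i _ => Complex.normSq_nonneg _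
  have hsumw : ∑ k, (star (w k) ⬝ᵥ w k).re
      = ((∑ k, (star (v k) ⬝ᵥ v k).re) + (∑ k, (star (v' k) ⬝ᵥ v' k).re)) / 2
        - (1/4) * ∑ k, D k := by
    rw [Finset.sum_congr rfl fun k _ => hEw k, Finset.sum_sub_distrib, ← Finset.mul_sum,
      ← Finset.sum_div, Finset.sum_add_distrib]
  have hDzero : ∀ k, D k = 0 := by
    have hle : ∑ k, D k ≤ 0 := by
      rw [hsumw] at hP
      linarith
    intro k
    have h1 : D k ≤ ∑ j, D j :=
      Finset.single_le_sum (fun j _ => hDnn j) (Finset.mem_univ k)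
    have := hDnn k
    linarith
  -- conclude
  intro k
  refine ⟨(u k).arg, ?_⟩
  have hexp : Complex.exp (((u k).arg : ℂ) * Complex.I) = u k := by
    have := Complex.norm_mul_exp_arg_mul_I (u k)
    rwa [hu1 k, Complex.ofReal_one, one_mul] at this
  rw [hexp]
  funext i
  have h0 : Complex.normSq (v k i - u k * v' k i) = 0 := by
    have := hDzero k
    rw [hD_def] at this
    have h1 := Finset.sum_eq_zero_iff_of_nonneg
      (fun j (_ : j ∈ Finset.univ) => Complex.normSq_nonneg (v k j - u k * v' k j)) |>.mp this
    exact h1 i (Finset.mem_univ i)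
  have h2 : v k i - u k * v' k i = 0 := Complex.normSq_eq_zero.mp h0
  exact sub_eq_zero.mp h2
end

section
/- Let λ be a KKT multiplier vector for the single-stream QoS-constrained power minimization problem: suppose (u, v, λ) satisfies the stationarity condition (I - (λ_k/γ_k) H_k^H u_k u_k^H H_k + Σ_{j≠k} λ_j H_j^H u_j u_j^H H_j) v_k = 0 for all k, with λ_k ≥ 0, γ_k > 0 and v_k ≠ 0 for all k. Then λ_k > 0 for all k. -/
open Matrix ComplexOrder

lemma vecMulVec_mulVec'_s17 {n m : Type*} [Fintype m] (w : n → ℂ) (s : m → ℂ) (x : m → ℂ) :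
    vecMulVec w s *ᵥ x = (s ⬝ᵥ x) • w := by
  ext i
  simp only [vecMulVec, mulVec, dotProduct, Pi.smul_apply, smul_eq_mul, of_apply]
  rw [Finset.sum_mul]
  refine Finset.sum_congr rfl fun j _ => ?_
  ring

lemma quad {n m : Type*} [Fintype n] [Fintype m] (B : Matrix n m ℂ) (w : n → ℂ) (x : m → ℂ) :
    star x ⬝ᵥ ((Bᴴ * vecMulVec w (star w) * B) *ᵥ x)
      = (star w ⬝ᵥ (B *ᵥ x)) * star (star w ⬝ᵥ (B *ᵥ x)) := by
  rw [Matrix.mul_assoc, ← mulVec_mulVec, ← mulVec_mulVec, dotProduct_mulVec,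
    ← star_mulVec, vecMulVec_mulVec'_s17, dotProduct_smul]
  set c := star w ⬝ᵥ (B *ᵥ x)
  have : star (B *ᵥ x) ⬝ᵥ w = star c := by
    simp [c, dotProduct, star_sum, mul_comm]
  rw [this, smul_eq_mul]

lemma sum_mulVecL {ι n m : Type*} [Fintype m] (s : Finset ι) (A : ι → Matrix n m ℂ) (x : m → ℂ) :
    (∑ j ∈ s, A j) *ᵥ x = ∑ j ∈ s, A j *ᵥ x := by
  ext i
  simp [mulVec, dotProduct, Matrix.sum_apply, Finset.sum_mul]
  rw [Finset.sum_comm]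

lemma dotProduct_sumL {ι m : Type*} [Fintype m] (s : Finset ι) (x : m → ℂ) (y : ι → m → ℂ) :
    x ⬝ᵥ (∑ j ∈ s, y j) = ∑ j ∈ s, x ⬝ᵥ y j := by
  simp [dotProduct, Finset.mul_sum, Finset.sum_apply]
  rw [Finset.sum_comm]

theorem stmt_17 {M K : ℕ} (N : Fin K → ℕ)
    (H : ∀ k, Matrix (Fin (N k)) (Fin M) ℂ)
    (u : ∀ k, Fin (N k) → ℂ) (v : Fin K → (Fin M → ℂ))
    (γ lam : Fin K → ℝ) (hγ : ∀ k, 0 < γ k) (hlam : ∀ k, 0 ≤ lam k)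
    (hv : ∀ k, v k ≠ 0)
    (hstat : ∀ k,
      ((1 : Matrix (Fin M) (Fin M) ℂ)
        - ((lam k / γ k : ℝ) : ℂ) • ((H k)ᴴ * vecMulVec (u k) (star (u k)) * H k)
        + ∑ j ∈ Finset.univ.erase k,
            ((lam j : ℝ) : ℂ) • ((H j)ᴴ * vecMulVec (u j) (star (u j)) * H j)).mulVec (v k) = 0) :
    ∀ k, 0 < lam k := by
  intro k
  rcases (hlam k).lt_or_eq with h | h
  · exact h
  exfalso
  have hk0 : lam k = 0 := h.symm
  have h0 : star (v k) ⬝ᵥ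
      (((1 : Matrix (Fin M) (Fin M) ℂ)
        - ((lam k / γ k : ℝ) : ℂ) • ((H k)ᴴ * vecMulVec (u k) (star (u k)) * H k)
        + ∑ j ∈ Finset.univ.erase k,
            ((lam j : ℝ) : ℂ) • ((H j)ᴴ * vecMulVec (u j) (star (u j)) * H j)) *ᵥ v k) = 0 := by
    rw [hstat k]; exact dotProduct_zero _
  rw [hk0] at h0
  simp only [zero_div, Complex.ofReal_zero, zero_smul, sub_zero, add_mulVec, one_mulVec,
    dotProduct_add, sum_mulVecL, dotProduct_sumL, smul_mulVec, dotProduct_smul,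
    smul_eq_mul, quad] at h0
  -- rewrite each quad term as real
  have hre : ∀ j, (star (u j) ⬝ᵥ (H j *ᵥ v k)) * star (star (u j) ⬝ᵥ (H j *ᵥ v k))
      = ((Complex.normSq (star (u j) ⬝ᵥ (H j *ᵥ v k)) : ℝ) : ℂ) := fun j => by
    simp [Complex.star_def, Complex.mul_conj]
  have hvv : star (v k) ⬝ᵥ v k = ((∑ i, Complex.normSq (v k i) : ℝ) : ℂ) := by
    simp [dotProduct, Complex.normSq_eq_conj_mul_self]
  rw [hvv] at h0
  simp only [hre] at h0
  have h0' : ((∑ i, Complex.normSq (v k i)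
      + ∑ j ∈ Finset.univ.erase k, lam j * Complex.normSq (star (u j) ⬝ᵥ (H j *ᵥ v k)) : ℝ) : ℂ)
      = 0 := by
    push_cast at h0 ⊢
    exact h0
  have h0'' : (∑ i, Complex.normSq (v k i))
      + ∑ j ∈ Finset.univ.erase k, lam j * Complex.normSq (star (u j) ⬝ᵥ (H j *ᵥ v k)) = 0 := by
    exact_mod_cast h0'
  have hpos : 0 < ∑ i, Complex.normSq (v k i) := by
    have : ∃ i, v k i ≠ 0 := Function.ne_iff.mp (hv k)
    obtain ⟨i, hi⟩ := this
    exact Finset.sum_pos' (fun i _ => Complex.normSq_nonneg _)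
      ⟨i, Finset.mem_univ i, Complex.normSq_pos.mpr hi⟩
  have hnn : 0 ≤ ∑ j ∈ Finset.univ.erase k, lam j * Complex.normSq (star (u j) ⬝ᵥ (H j *ᵥ v k)) :=
    Finset.sum_nonneg fun j _ => mul_nonneg (hlam j) (Complex.normSq_nonneg _)
  linarith
end
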